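/- Diagonal Mehler formula for Hermite polynomials: For every real u with |u| < 1 and every x ∈ ℝ, the series Σ_{a=0}^{∞} He_a(x)² · u^a / a! converges and equals (1 − u²)^{−1/2} · exp( (u/(1+u)) · x² ). -/

import Mathlib

set_option maxHeartbeats 1000000
section MehlerAux
open Polynomial
noncomputable def mH (n : ℕ) : ℝ[X] := (hermite n).map (Int.castRingHom ℝ)

theorem derivH : ∀ n : ℕ, derivative (hermite n) = (n : ℤ[X]) * hermite (n - 1) := by
  intro n
  induction n using Nat.twoStepInduction with
  | zero => simp [hermite_zero]
  | one => simp [hermite_one, hermite_zero]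
  | more n ih1 ih2 =>
    have h1 : hermite (n+2) = X * hermite (n+1) - derivative (hermite (n+1)) :=
      hermite_succ (n+1)
    have h2 : hermite (n+1) = X * hermite n - (n : ℤ[X]) * hermite (n-1) := by
      rw [hermite_succ n, ih1]
    have ih2' : derivative (hermite (n+1)) = ((n:ℤ[X]) + 1) * hermite n := by
      rw [ih2]; push_cast; rfl
    show _ = ((n + 2 : ℕ) : ℤ[X]) * hermite (n + 1)
    rw [h1, derivative_sub, derivative_mul, derivative_X, ih2', derivative_mul,
      derivative_add, derivative_natCast, derivative_one, ih1, h2]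
    push_cast
    ring
open Polynomial

lemma mH_aeval (n : ℕ) (y : ℝ) : (aeval y (hermite n) : ℝ) = (mH n).eval y := by
  rw [aeval_def, eval₂_eq_eval_map]; rfl

lemma mH_zero (y : ℝ) : (mH 0).eval y = 1 := by simp [mH, hermite_zero]
lemma mH_one (y : ℝ) : (mH 1).eval y = y := by simp [mH, hermite_one]

lemma mH_succ (n : ℕ) (y : ℝ) :
    (mH (n+1)).eval y = y * (mH n).eval y - n * (mH (n-1)).eval y := by
  unfold mH
  rw [hermite_succ n, derivH n]
  push_cast [Polynomial.map_sub, Polynomial.map_mul]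
  simp

lemma mH_hasDerivAt (n : ℕ) (y : ℝ) :
    HasDerivAt (fun z => (mH n).eval z) ((n : ℝ) * (mH (n-1)).eval y) y := by
  have h := (mH n).hasDerivAt y
  convert h using 1
  · rfl
  unfold mH
  rw [derivative_map, derivH n]
  push_cast [Polynomial.map_mul]
  simp
open Polynomial

noncomputable def mP (r : ℝ) : ℕ → ℝ
  | 0 => 1
  | n + 1 => mP r n * (1 + r / Real.sqrt (n + 1))

lemma mP_pos {r : ℝ} (hr : 0 ≤ r) (n : ℕ) : 0 < mP r n := by
  induction n with
  | zero => norm_num [mP]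
  | succ n ih =>
    rw [mP]
    have : 0 ≤ r / Real.sqrt (n+1) := by positivity
    nlinarith

lemma mP_succ (r : ℝ) (n : ℕ) : mP r (n+1) = mP r n * (1 + r / Real.sqrt ((n:ℝ)+1)) := by
  rw [mP]

lemma mP_le_succ {r : ℝ} (hr : 0 ≤ r) (n : ℕ) : mP r n ≤ mP r (n + 1) := by
  rw [mP]
  have h1 : 0 ≤ r / Real.sqrt (n+1) := by positivity
  nlinarith [mP_pos hr n]

lemma mH_bound {r : ℝ} (hr : 0 ≤ r) {y : ℝ} (hy : |y| ≤ r) :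
    ∀ n : ℕ, |(mH n).eval y| ≤ Real.sqrt (n.factorial) * mP r n := by
  intro n
  induction n using Nat.twoStepInduction with
  | zero => simp [mH_zero, mP]
  | one =>
    have h1 : mP r 1 = 1 + r := by norm_num [mP]
    simp only [mH_one, Nat.factorial_one, Nat.cast_one, Real.sqrt_one, one_mul, h1]
    linarith
  | more n ih1 ih2 =>
    have hP1 := mP_pos hr (n+1)
    have hP0 := mP_pos hr n
    have key : |(mH (n+2)).eval y| ≤
        r * (Real.sqrt ((n+1).factorial) * mP r (n+1)) +
        ((n:ℝ)+1) * (Real.sqrt (n.factorial) * mP r n) := by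
      rw [mH_succ (n+1) y]
      have e : (n + 1 : ℕ) - 1 = n := rfl
      rw [e]
      calc |y * (mH (n+1)).eval y - (↑(n+1)) * (mH n).eval y|
          ≤ |y| * |(mH (n+1)).eval y| + ((n:ℝ)+1) * |(mH n).eval y| := by
            refine (abs_sub _ _).trans ?_
            rw [abs_mul, abs_mul]
            push_cast
            rw [abs_of_nonneg (show (0:ℝ) ≤ (n:ℝ)+1 by positivity)]
        _ ≤ _ := by
            gcongr
    refine key.trans ?_
    have hsqpos : (0:ℝ) < Real.sqrt ((n:ℝ)+2) := by positivity
    have s1 : Real.sqrt (((n+2).factorial : ℝ)) =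
        Real.sqrt ((n:ℝ)+2) * Real.sqrt (((n+1).factorial : ℝ)) := by
      rw [← Real.sqrt_mul (by positivity)]
      congr 1
      rw [Nat.factorial_succ (n+1)]
      push_cast
      ring
    have s2 : ((n:ℝ)+1) * Real.sqrt ((n.factorial : ℝ)) ≤
        Real.sqrt ((n:ℝ)+2) * Real.sqrt (((n+1).factorial : ℝ)) := by
      have h : ((n:ℝ)+1) * Real.sqrt (n.factorial) = Real.sqrt (((n:ℝ)+1)^2 * n.factorial) := by
        rw [Real.sqrt_mul (by positivity), Real.sqrt_sq (by positivity)]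
      rw [h, ← Real.sqrt_mul (by positivity)]
      apply Real.sqrt_le_sqrt
      have hf : ((n+1).factorial : ℝ) = ((n:ℝ)+1) * n.factorial := by
        rw [Nat.factorial_succ]; push_cast; ring
      rw [hf]
      nlinarith [show (0:ℝ) ≤ (n.factorial:ℝ) by positivity]
    have expand : Real.sqrt (((n+2).factorial : ℝ)) * mP r (n+2) =
        Real.sqrt ((n:ℝ)+2) * Real.sqrt (((n+1).factorial : ℝ)) * mP r (n+1)
        + r * Real.sqrt (((n+1).factorial : ℝ)) * mP r (n+1) := by
      rw [s1, mP_succ r (n+1)]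
      have h2 : Real.sqrt ((((n+1):ℕ):ℝ)+1) = Real.sqrt ((n:ℝ)+2) := by
        congr 1; push_cast; ring
      rw [h2]
      field_simp
    rw [expand]
    have : ((n:ℝ)+1) * (Real.sqrt (n.factorial) * mP r n) ≤
        Real.sqrt ((n:ℝ)+2) * Real.sqrt (((n+1).factorial:ℝ)) * mP r (n+1) := by
      have := mP_le_succ hr n
      calc ((n:ℝ)+1) * (Real.sqrt (n.factorial) * mP r n)
          = (((n:ℝ)+1) * Real.sqrt (n.factorial)) * mP r n := by ring
        _ ≤ (Real.sqrt ((n:ℝ)+2) * Real.sqrt (((n+1).factorial:ℝ))) * mP r (n+1) := by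
            gcongr
    linarith
open Filter in
lemma summ_mP {r ρ : ℝ} (hr : 0 ≤ r) (hρ0 : 0 ≤ ρ) (hρ : ρ < 1) :
    Summable (fun a : ℕ => ((a:ℝ)+1) * mP r a ^ 2 * ρ^a) := by
  set B : ℕ → ℝ := fun a => ((a:ℝ)+1) * mP r a ^ 2 * ρ^a with hB
  set q : ℕ → ℝ := fun n => (((n:ℝ)+2)/((n:ℝ)+1)) * (1 + r / Real.sqrt ((n:ℝ)+1))^2 * ρ
    with hq
  have hBq : ∀ n, B (n+1) = q n * B n := by
    intro n
    have h1 : ((n:ℝ)+1) ≠ 0 := by positivity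
    simp only [hB, hq, mP_succ r n]
    push_cast
    field_simp
    ring
  have hsq : Tendsto (fun n : ℕ => Real.sqrt ((n:ℝ)+1)) atTop atTop := by
    refine tendsto_atTop_atTop.2 (fun b => ⟨Nat.ceil (b^2), fun n hn => ?_⟩)
    have h1 : b ≤ Real.sqrt (b^2) := by
      rw [Real.sqrt_sq_eq_abs]; exact le_abs_self b
    refine h1.trans (Real.sqrt_le_sqrt ?_)
    calc b^2 ≤ (Nat.ceil (b^2) : ℝ) := Nat.le_ceil _
      _ ≤ n := by exact_mod_cast hn
      _ ≤ (n:ℝ)+1 := by linarith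
  have t2 : Tendsto (fun n : ℕ => 1 + r / Real.sqrt ((n:ℝ)+1)) atTop (nhds 1) := by
    have := Tendsto.div_atTop (tendsto_const_nhds (x := r)) hsq
    have h := this.const_add (1:ℝ)
    simpa using h
  have t1 : Tendsto (fun n : ℕ => ((n:ℝ)+2)/((n:ℝ)+1)) atTop (nhds 1) := by
    have h0 : (fun n : ℕ => ((n:ℝ)+2)/((n:ℝ)+1)) = fun n : ℕ => 1 + 1/((n:ℝ)+1) := by
      funext n
      have h1 : ((n:ℝ)+1) ≠ 0 := by positivity
      field_simp; ring
    rw [h0]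
    have h := tendsto_one_div_add_atTop_nhds_zero_nat.const_add (1:ℝ)
    simpa using h
  have tq : Tendsto q atTop (nhds ρ) := by
    have := (t1.mul (t2.pow 2)).mul_const ρ
    simpa using this
  have hlt : ρ < (1+ρ)/2 := by linarith
  have hev : ∀ᶠ n in atTop, q n < (1+ρ)/2 := tq.eventually_lt_const hlt
  refine summable_of_ratio_norm_eventually_le (show (1+ρ)/2 < 1 by linarith) ?_
  filter_upwards [hev] with n hn
  have hBpos : 0 ≤ B n := by
    have := mP_pos hr n
    positivity
  have hqpos : 0 ≤ q n := by
    have h2 : 0 ≤ r / Real.sqrt ((n:ℝ)+1) := by positivity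
    have : (0:ℝ) ≤ (((n:ℝ)+2)/((n:ℝ)+1)) := by positivity
    positivity
  rw [Real.norm_eq_abs, Real.norm_eq_abs, hBq n,
    abs_of_nonneg (mul_nonneg hqpos hBpos), abs_of_nonneg hBpos]
  exact mul_le_mul_of_nonneg_right hn.le hBpos
open Polynomial
noncomputable def tt (u : ℝ) (a : ℕ) (z : ℝ) : ℝ :=
  (mH a).eval z ^ 2 * u ^ a / a.factorial
noncomputable def dtt (u : ℝ) (a : ℕ) (z : ℝ) : ℝ :=
  (2 * (mH a).eval z * ((a : ℝ) * (mH (a-1)).eval z)) * u ^ a / a.factorial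

lemma tt_hasDeriv (u : ℝ) (a : ℕ) (z : ℝ) : HasDerivAt (tt u a ·) (dtt u a z) z := by
  have h := ((mH_hasDerivAt a z).pow 2).mul_const (u ^ a / a.factorial)
  convert h using 1
  · rfl
  · rfl
  · funext w; simp only [tt, Pi.pow_apply]; ring
  · simp only [dtt]; ring

lemma fact_cast_pos (a : ℕ) : (0:ℝ) < (a.factorial : ℝ) := by
  exact_mod_cast a.factorial_pos

lemma sq_sqrt_fact (a : ℕ) :
    Real.sqrt (a.factorial) * Real.sqrt (a.factorial) = (a.factorial : ℝ) :=
  Real.mul_self_sqrt (by positivity)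

lemma tt_bound (u : ℝ) {R : ℝ} (hR : 0 ≤ R) (a : ℕ) {z : ℝ} (hz : |z| ≤ R) :
    ‖tt u a z‖ ≤ ((a:ℝ)+1) * mP R a ^ 2 * |u| ^ a := by
  have hb := mH_bound hR hz a
  have hP := mP_pos hR a
  have hf := fact_cast_pos a
  have h1 : ‖tt u a z‖ = |(mH a).eval z| ^ 2 * |u| ^ a / a.factorial := by
    simp only [tt, Real.norm_eq_abs, abs_div, abs_mul, abs_pow, sq_abs, abs_pow]
    rw [abs_of_nonneg (le_of_lt hf)]
  rw [h1]
  have h2 : |(mH a).eval z| ^ 2 ≤ (a.factorial : ℝ) * mP R a ^ 2 := by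
    calc |(mH a).eval z| ^2 ≤ (Real.sqrt a.factorial * mP R a)^2 := by
          apply pow_le_pow_left₀ (abs_nonneg _) hb
      _ = (a.factorial : ℝ) * mP R a ^ 2 := by
          rw [mul_pow, sq, sq_sqrt_fact]
  calc |(mH a).eval z| ^ 2 * |u| ^ a / a.factorial
      ≤ ((a.factorial:ℝ) * mP R a ^ 2) * |u| ^ a / a.factorial := by
        gcongr
    _ = mP R a ^ 2 * |u| ^ a := by field_simp
    _ ≤ ((a:ℝ)+1) * mP R a ^ 2 * |u| ^ a := by
        have h3 : (1:ℝ) ≤ (a:ℝ)+1 := by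
          have := Nat.cast_nonneg (α := ℝ) a; linarith
        nlinarith [mul_nonneg (sq_nonneg (mP R a)) (pow_nonneg (abs_nonneg u) a)]

lemma dtt_bound (u : ℝ) {R : ℝ} (hR : 0 ≤ R) (a : ℕ) {z : ℝ} (hz : |z| ≤ R) :
    ‖dtt u a z‖ ≤ 2 * (((a:ℝ)+1) * mP R a ^ 2 * |u| ^ a) := by
  have hP := mP_pos hR a
  have hf := fact_cast_pos a
  have hb := mH_bound hR hz a
  have h1 : ‖dtt u a z‖ =
      2 * |(mH a).eval z| * ((a:ℝ) * |(mH (a-1)).eval z|) * |u| ^ a / a.factorial := by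
    simp only [dtt, Real.norm_eq_abs, abs_div, abs_mul, abs_pow]
    rw [abs_of_nonneg (le_of_lt hf), abs_of_nonneg (show (0:ℝ) ≤ 2 by norm_num),
      Nat.abs_cast]
  rw [h1]
  have hb' := mH_bound hR hz (a-1)
  have hPm : mP R (a-1) ≤ mP R a := by
    rcases a with _ | m
    · simp
    · exact mP_le_succ hR m
  have hsf : Real.sqrt ((a-1).factorial) ≤ Real.sqrt (a.factorial) := by
    apply Real.sqrt_le_sqrt
    exact_mod_cast Nat.factorial_le (Nat.sub_le a 1)
  have key : |(mH a).eval z| * |(mH (a-1)).eval z| ≤ (a.factorial : ℝ) * mP R a ^ 2 := by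
    calc |(mH a).eval z| * |(mH (a-1)).eval z|
        ≤ (Real.sqrt a.factorial * mP R a) * (Real.sqrt ((a-1).factorial) * mP R (a-1)) := by
          exact mul_le_mul hb hb' (abs_nonneg _)
            (mul_nonneg (Real.sqrt_nonneg _) hP.le)
      _ ≤ (Real.sqrt a.factorial * mP R a) * (Real.sqrt (a.factorial) * mP R a) := by
          refine mul_le_mul_of_nonneg_left ?_ (mul_nonneg (Real.sqrt_nonneg _) hP.le)
          exact mul_le_mul hsf hPm (mP_pos hR _).le (Real.sqrt_nonneg _)
      _ = (Real.sqrt a.factorial * Real.sqrt a.factorial) * (mP R a * mP R a) := by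
          ring
      _ = (a.factorial : ℝ) * mP R a ^ 2 := by
          rw [sq_sqrt_fact]; ring
  calc 2 * |(mH a).eval z| * ((a:ℝ) * |(mH (a-1)).eval z|) * |u| ^ a / a.factorial
      = 2 * (a:ℝ) * (|(mH a).eval z| * |(mH (a-1)).eval z|) * |u| ^ a / a.factorial := by
        ring
    _ ≤ 2 * (a:ℝ) * ((a.factorial : ℝ) * mP R a ^ 2) * |u| ^ a / a.factorial := by
        gcongr
    _ = 2 * ((a:ℝ) * mP R a ^ 2 * |u| ^ a) := by field_simp
    _ ≤ 2 * (((a:ℝ)+1) * mP R a ^ 2 * |u| ^ a) := by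
        have h4 : (a:ℝ) ≤ (a:ℝ)+1 := by linarith
        have h5 : (0:ℝ) ≤ mP R a ^ 2 * |u| ^ a := by positivity
        nlinarith
open Polynomial
lemma summable_tt {u : ℝ} (hu : |u| < 1) (z : ℝ) : Summable (fun a => tt u a z) := by
  have h := summ_mP (abs_nonneg z) (abs_nonneg u) hu
  refine Summable.of_norm_bounded h (fun a => tt_bound u (abs_nonneg z) a le_rfl)

noncomputable def FF (u : ℝ) (z : ℝ) : ℝ := ∑' a, tt u a z

lemma FF_hasDeriv {u : ℝ} (hu : |u| < 1) (y : ℝ) :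
    HasDerivAt (FF u) (2 * (u/(1+u)) * y * FF u y) y := by
  have h1u : (0:ℝ) < 1 + u := by
    have := abs_lt.1 hu; linarith [this.1]
  set R : ℝ := |y| + 1 with hR
  have hR0 : 0 ≤ R := by positivity
  have hyR : y ∈ Metric.ball (0:ℝ) R := by
    simp [Real.dist_eq, hR]
  have hmem : ∀ z ∈ Metric.ball (0:ℝ) R, |z| ≤ R := by
    intro z hz
    rw [Metric.mem_ball, Real.dist_eq, sub_zero] at hz
    exact hz.le
  have hBsum : Summable (fun a : ℕ => 2 * (((a:ℝ)+1) * mP R a ^ 2 * |u| ^ a)) :=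
    (summ_mP hR0 (abs_nonneg u) hu).mul_left 2
  have key : HasDerivAt (fun z => ∑' a, tt u a z) (∑' a, dtt u a y) y := by
    refine hasDerivAt_tsum_of_isPreconnected hBsum Metric.isOpen_ball
      ((convex_ball (0:ℝ) R).isPreconnected) (fun a z _ => tt_hasDeriv u a z)
      (fun a z hz => dtt_bound u hR0 a (hmem z hz)) hyR
      ((summable_tt hu y)) hyR
  have hS : HasSum (fun a => dtt u a y) (∑' a, dtt u a y) := by
    refine Summable.hasSum ?_
    exact Summable.of_norm_bounded hBsum (fun a => dtt_bound u hR0 a (hmem y hyR))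
  set S := ∑' a, dtt u a y with hSdef
  have hF : HasSum (fun a => tt u a y) (FF u y) := (summable_tt hu y).hasSum
  -- shift
  have h0 : dtt u 0 y = 0 := by simp [dtt]
  have hshift : HasSum (fun b => dtt u (b+1) y) S := by
    refine (hasSum_nat_add_iff (f := fun a => dtt u a y) 1).2 ?_
    simpa [h0] using hS
  have hterm : ∀ b : ℕ, dtt u (b+1) y = 2*u*y * tt u b y - u * dtt u b y := by
    intro b
    have hf := fact_cast_pos b
    have hfs : ((b+1).factorial : ℝ) = ((b:ℝ)+1) * b.factorial := by
      rw [Nat.factorial_succ]; push_cast; ring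
    simp only [dtt, tt, Nat.add_sub_cancel, mH_succ b y, hfs]
    have hb1 : ((b:ℝ)+1) ≠ 0 := by positivity
    field_simp
    push_cast
    ring
  have hcomb : HasSum (fun b => 2*u*y * tt u b y - u * dtt u b y)
      (2*u*y * FF u y - u * S) := (hF.mul_left (2*u*y)).sub (hS.mul_left u)
  have heq : S = 2*u*y * FF u y - u * S := by
    have hfe : (fun b => 2*u*y * tt u b y - u * dtt u b y)
        = fun b => dtt u (b+1) y := funext fun b => (hterm b).symm
    rw [hfe] at hcomb
    exact hshift.unique hcomb
  have hval : S = 2 * (u/(1+u)) * y * FF u y := by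
    have h1u' : (1+u) ≠ 0 := ne_of_gt h1u
    field_simp
    linarith [heq]
  have goal' : HasDerivAt (FF u) S y := key
  rwa [hval] at goal'
open Polynomial
noncomputable def cc (a : ℕ) : ℝ := (mH a).eval 0 ^ 2 / a.factorial

lemma mP_zero_r (n : ℕ) : mP 0 n = 1 := by
  induction n with
  | zero => rfl
  | succ n ih => rw [mP, ih]; simp

lemma cc_nonneg (a : ℕ) : 0 ≤ cc a := by
  unfold cc; positivity

lemma cc_le_one (a : ℕ) : cc a ≤ 1 := by
  have h := mH_bound (le_refl (0:ℝ)) (y := 0) (by simp) a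
  rw [mP_zero_r, mul_one] at h
  have h2 : (mH a).eval 0 ^ 2 ≤ (a.factorial : ℝ) := by
    have := sq_abs ((mH a).eval 0)
    nlinarith [Real.sq_sqrt (show (0:ℝ) ≤ a.factorial by positivity),
      Real.sqrt_nonneg ((a.factorial : ℝ)), abs_nonneg ((mH a).eval 0)]
  unfold cc
  rw [div_le_one (fact_cast_pos a)]
  exact h2

lemma cc_one : cc 1 = 0 := by unfold cc; simp [mH_one]

lemma crec (b : ℕ) : cc (b+2) = ((b:ℝ)+1)/((b:ℝ)+2) * cc b := by
  have h := mH_succ (b+1) 0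
  have e : (b + 1 : ℕ) - 1 = b := rfl
  rw [e] at h
  simp only [zero_mul, zero_sub] at h
  unfold cc
  rw [h]
  have hf2 : ((b+2).factorial : ℝ) = ((b:ℝ)+2) * (((b:ℝ)+1) * b.factorial) := by
    rw [show b+2 = (b+1)+1 from rfl, Nat.factorial_succ, Nat.factorial_succ]
    push_cast; ring
  rw [hf2]
  have h1 : ((b:ℝ)+1) ≠ 0 := by positivity
  have h2 : ((b:ℝ)+2) ≠ 0 := by positivity
  have h3 : (b.factorial : ℝ) ≠ 0 := (fact_cast_pos b).ne'
  push_cast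
  field_simp

noncomputable def gg (v : ℝ) : ℝ := ∑' a, cc a * v ^ a

lemma summable_gg {v : ℝ} (hv : |v| < 1) : Summable (fun a => cc a * v ^ a) := by
  refine Summable.of_norm_bounded (summable_geometric_of_lt_one (abs_nonneg v) hv) ?_
  intro a
  rw [Real.norm_eq_abs, abs_mul, abs_of_nonneg (cc_nonneg a), abs_pow]
  calc cc a * |v| ^ a ≤ 1 * |v| ^ a := by
        gcongr
        exact cc_le_one a
    _ = |v| ^ a := one_mul _

noncomputable def Dgt (a : ℕ) (v : ℝ) : ℝ := cc a * ((a:ℝ) * v ^ (a-1))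

lemma summable_Dgt {ρ : ℝ} (hρ0 : 0 < ρ) (hρ : ρ < 1) {v : ℝ} (hv : |v| ≤ ρ) :
    Summable (fun a => Dgt a v) := by
  have hgeo : Summable (fun a : ℕ => (1/ρ) * ((a:ℝ)^1 * ρ ^ a)) :=
    (summable_pow_mul_geometric_of_norm_lt_one (R := ℝ) 1
      (by rwa [Real.norm_eq_abs, abs_of_pos hρ0])).mul_left _
  refine Summable.of_norm_bounded hgeo ?_
  intro a
  rw [Real.norm_eq_abs, Dgt, abs_mul, abs_of_nonneg (cc_nonneg a), abs_mul,
    Nat.abs_cast, abs_pow]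
  rcases a with _ | m
  · simp
  · have e : (m + 1 : ℕ) - 1 = m := rfl
    rw [e]
    have h1 : (1/ρ) * (((m+1:ℕ):ℝ)^1 * ρ ^ (m+1)) = ((m+1:ℕ):ℝ) * ρ ^ m := by
      rw [pow_succ]
      field_simp
      ring
    rw [h1]
    calc cc (m+1) * (((m+1:ℕ):ℝ) * |v| ^ m) ≤ 1 * (((m+1:ℕ):ℝ) * ρ ^ m) := by
          have h2 : |v|^m ≤ ρ^m := pow_le_pow_left₀ (abs_nonneg v) hv m
          have h3 : (0:ℝ) ≤ ((m+1:ℕ):ℝ) := Nat.cast_nonneg _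
          exact mul_le_mul (cc_le_one (m+1)) (mul_le_mul_of_nonneg_left h2 h3)
            (by positivity) zero_le_one
      _ = ((m+1:ℕ):ℝ) * ρ ^ m := one_mul _

lemma gg_hasDeriv {v : ℝ} (hv : |v| < 1) :
    HasDerivAt gg (∑' a, Dgt a v) v := by
  set ρ : ℝ := (1 + |v|)/2 with hρdef
  have hρ0 : 0 < ρ := by positivity
  have hρ1 : ρ < 1 := by rw [hρdef]; linarith
  have hvρ : |v| < ρ := by rw [hρdef]; linarith
  have hmem : ∀ z ∈ Metric.ball (0:ℝ) ρ, |z| ≤ ρ := by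
    intro z hz
    rw [Metric.mem_ball, Real.dist_eq, sub_zero] at hz
    exact hz.le
  have hBsum : Summable (fun a : ℕ => (1/ρ) * ((a:ℝ)^1 * ρ ^ a)) :=
    (summable_pow_mul_geometric_of_norm_lt_one (R := ℝ) 1
      (by rwa [Real.norm_eq_abs, abs_of_pos hρ0])).mul_left _
  refine hasDerivAt_tsum_of_isPreconnected (y₀ := v) hBsum Metric.isOpen_ball
    ((convex_ball (0:ℝ) ρ).isPreconnected)
    (fun a z _ => ?_) (fun a z hz => ?_) (Metric.mem_ball.2 ?_) ?_ (Metric.mem_ball.2 ?_)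
  · exact (hasDerivAt_pow a z).const_mul (cc a)
  · -- ‖Dgt a z‖ ≤ bound
    have h := hmem z hz
    rw [Real.norm_eq_abs]
    have : |Dgt a z| ≤ (1/ρ) * ((a:ℝ)^1 * ρ ^ a) := by
      have hs := summable_Dgt hρ0 hρ1 h
      -- reprove the bound (reuse argument)
      rw [Dgt, abs_mul, abs_of_nonneg (cc_nonneg a), abs_mul, Nat.abs_cast, abs_pow]
      rcases a with _ | m
      · simp
      · have e : (m + 1 : ℕ) - 1 = m := rfl
        rw [e]
        have h1 : (1/ρ) * (((m+1:ℕ):ℝ)^1 * ρ ^ (m+1)) = ((m+1:ℕ):ℝ) * ρ ^ m := by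
          rw [pow_succ]; field_simp; ring
        rw [h1]
        have h2 : |z|^m ≤ ρ^m := pow_le_pow_left₀ (abs_nonneg z) h m
        have h3 : (0:ℝ) ≤ ((m+1:ℕ):ℝ) := Nat.cast_nonneg _
        calc cc (m+1) * (((m+1:ℕ):ℝ) * |z| ^ m) ≤ 1 * (((m+1:ℕ):ℝ) * ρ ^ m) :=
              mul_le_mul (cc_le_one (m+1)) (mul_le_mul_of_nonneg_left h2 h3)
                (by positivity) zero_le_one
          _ = ((m+1:ℕ):ℝ) * ρ ^ m := one_mul _
    exact this
  · rw [Real.dist_eq, sub_zero]; exact hvρ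
  · exact summable_gg hv
  · rw [Real.dist_eq, sub_zero]; exact hvρ

lemma gg_deriv_rel {v : ℝ} (hv : |v| < 1) :
    (1 - v^2) * (∑' a, Dgt a v) = v * gg v := by
  set D := ∑' a, Dgt a v with hD
  have hρ0 : (0:ℝ) < (1+|v|)/2 := by positivity
  have hρ1 : (1+|v|)/2 < 1 := by linarith
  have hvρ : |v| ≤ (1+|v|)/2 := by linarith
  have hsum : Summable (fun a => Dgt a v) := summable_Dgt hρ0 hρ1 hvρ
  have hDs : HasSum (fun a => Dgt a v) D := hsum.hasSum
  have hg : HasSum (fun a => cc a * v ^ a) (gg v) := (summable_gg hv).hasSum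
  have h0 : Dgt 0 v = 0 := by simp [Dgt]
  have h1 : Dgt 1 v = 0 := by simp [Dgt, cc_one]
  have hshift : HasSum (fun b => Dgt (b+2) v) D := by
    refine (hasSum_nat_add_iff (f := fun a => Dgt a v) 2).2 ?_
    have : ∑ i ∈ Finset.range 2, Dgt i v = 0 := by
      simp [Finset.sum_range_succ, h0, h1]
    rw [this, add_zero]
    exact hDs
  have hterm : ∀ b : ℕ, Dgt (b+2) v = v^2 * Dgt b v + v * (cc b * v ^ b) := by
    intro b
    have hc := crec b
    rcases b with _ | m
    · show Dgt 2 v = v^2 * Dgt 0 v + v * (cc 0 * v^0)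
      simp only [Dgt, hc]
      push_cast
      ring
    · have e1 : (m + 1 + 2 : ℕ) - 1 = m + 2 := rfl
      have e2 : (m + 1 : ℕ) - 1 = m := rfl
      simp only [Dgt, e1, e2, hc]
      have hm2 : ((m:ℝ)+1+2) ≠ 0 := by positivity
      push_cast
      field_simp
      ring
  have hcomb : HasSum (fun b => v^2 * Dgt b v + v * (cc b * v ^ b))
      (v^2 * D + v * gg v) := (hDs.mul_left _).add (hg.mul_left v)
  have heq : D = v^2 * D + v * gg v := by
    have hfe : (fun b => v^2 * Dgt b v + v * (cc b * v ^ b))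
        = fun b => Dgt (b+2) v := funext fun b => (hterm b).symm
    rw [hfe] at hcomb
    exact hshift.unique hcomb
  linarith [heq]

lemma gg_zero : gg 0 = 1 := by
  unfold gg
  rw [tsum_eq_single 0 (fun b hb => by simp [zero_pow hb])]
  simp [cc, mH_zero]

lemma gg_sq {u : ℝ} (hu : |u| < 1) : gg u ^ 2 * (1 - u^2) = 1 := by
  set h : ℝ → ℝ := fun v => gg v ^ 2 * (1 - v^2) with hh
  have hd : ∀ v ∈ Set.Ioo (-1:ℝ) 1, HasDerivAt h 0 v := by
    intro v hv
    have hv' : |v| < 1 := abs_lt.2 ⟨hv.1, hv.2⟩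
    have hgd := gg_hasDeriv hv'
    have h1 : HasDerivAt (fun w => gg w ^ 2) (2 * gg v * (∑' a, Dgt a v)) v := by
      have := hgd.pow 2
      convert this using 1
      · rfl
      · rfl
      · rfl
      push_cast
      ring
    have h2 : HasDerivAt (fun w : ℝ => 1 - w^2) (-(2*v)) v := by
      have := (hasDerivAt_pow 2 v).const_sub 1
      convert this using 1
      · rfl
      · rfl
      push_cast
      ring
    have hprod := h1.mul h2
    convert hprod using 1
    · rfl
    · rfl
    · rfl
    have hrel := gg_deriv_rel hv'
    linear_combination (-2 * gg v) * hrel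
  have hconst : h u = h 0 := by
    refine (convex_Ioo (-1:ℝ) 1).is_const_of_fderivWithin_eq_zero (𝕜 := ℝ) ?_ ?_ ?_ ?_
    · intro v hv
      exact ((hd v hv).differentiableAt).differentiableWithinAt
    · intro v hv
      rw [fderivWithin_of_isOpen isOpen_Ioo hv]
      have hfd := (hd v hv).hasFDerivAt
      rw [hfd.fderiv]
      ext w
      simp
    · exact ⟨by linarith [abs_lt.1 hu], by linarith [abs_lt.1 hu]⟩
    · exact ⟨by norm_num, by norm_num⟩
  have h0 : h 0 = 1 := by simp [hh, gg_zero]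
  have := hconst.trans h0
  simpa [hh] using this

lemma gg_ge_one {u : ℝ} (hu : |u| < 1) : 1 ≤ gg u := by
  have hg : HasSum (fun a => cc a * u ^ a) (gg u) := (summable_gg hu).hasSum
  have h0 : cc 0 * u ^ 0 = 1 := by simp [cc, mH_zero]
  have hnn : ∀ a, a ≠ 0 → 0 ≤ cc a * u ^ a := by
    intro a _
    rcases Nat.even_or_odd a with he | ho
    · exact mul_nonneg (cc_nonneg a) (he.pow_nonneg u)
    · have : (mH a).eval 0 = 0 := by
        have hco := Polynomial.coeff_hermite_of_odd_add (n := a) (k := 0) (by simpa using ho)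
        rw [show (mH a).eval 0 = ((hermite a).coeff 0 : ℝ) by
          rw [← Polynomial.coeff_zero_eq_eval_zero]; simp [mH]]
        rw [hco]; simp
      simp [cc, this]
  calc (1:ℝ) = cc 0 * u ^ 0 := h0.symm
    _ ≤ gg u := le_hasSum hg 0 hnn

lemma gg_eq {u : ℝ} (hu : |u| < 1) : gg u = (1 - u^2) ^ (-(1/2 : ℝ)) := by
  have h1 : 0 < 1 - u^2 := by
    have := abs_lt.1 hu
    nlinarith [sq_abs u, abs_nonneg u]
  have hg1 := gg_ge_one hu
  have hsq := gg_sq hu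
  have hgg : gg u = Real.sqrt (1 / (1 - u^2)) := by
    rw [show (1:ℝ)/(1-u^2) = gg u ^ 2 by field_simp; linarith [hsq]]
    rw [Real.sqrt_sq (by linarith)]
  rw [hgg, Real.rpow_neg h1.le, one_div, Real.sqrt_inv, Real.sqrt_eq_rpow]
open Polynomial
lemma FF_eq {u : ℝ} (hu : |u| < 1) (x : ℝ) :
    FF u x = FF u 0 * Real.exp (u/(1+u) * x^2) := by
  set c : ℝ := u/(1+u) with hc
  set G : ℝ → ℝ := fun z => FF u z * Real.exp (-(c * z^2)) with hG
  have hGd : ∀ y : ℝ, HasDerivAt G 0 y := by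
    intro y
    have he : HasDerivAt (fun z : ℝ => Real.exp (-(c * z^2)))
        (Real.exp (-(c * y^2)) * (-(c * (2*y)))) y := by
      have h1 : HasDerivAt (fun z : ℝ => -(c * z^2)) (-(c * (2*y))) y := by
        have := (hasDerivAt_pow 2 y).const_mul c
        have h2 := this.neg
        convert h2 using 1
        · rfl
        · rfl
        · rfl
        push_cast; ring
      exact h1.exp
    have hprod := (FF_hasDeriv hu y).mul he
    convert hprod using 1
    · rfl
    · rfl
    · rfl
    ring
  have hconst : G x = G 0 := by
    have hdiff : Differentiable ℝ G := fun y => (hGd y).differentiableAt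
    have hzero : ∀ y, deriv G y = 0 := fun y => (hGd y).deriv
    exact is_const_of_deriv_eq_zero hdiff hzero x 0
  have h0 : G 0 = FF u 0 := by simp [hG]
  have hx : G x = FF u x * Real.exp (-(c * x^2)) := rfl
  rw [hx, h0] at hconst
  have hexp : Real.exp (-(c * x^2)) * Real.exp (c * x^2) = 1 := by
    rw [← Real.exp_add]; simp
  calc FF u x = FF u x * (Real.exp (-(c * x^2)) * Real.exp (c * x^2)) := by
        rw [hexp, mul_one]
    _ = (FF u x * Real.exp (-(c * x^2))) * Real.exp (c * x^2) := by ring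
    _ = FF u 0 * Real.exp (c * x^2) := by rw [hconst]

lemma FF_zero_eq {u : ℝ} : FF u 0 = gg u :=
  tsum_congr fun a => by unfold tt cc; ring

end MehlerAux

/-- Diagonal Mehler formula for Hermite polynomials: for `|u| < 1`,
`∑_{a=0}^{∞} He_a(x)² u^a / a! = (1-u²)^{-1/2} exp((u/(1+u)) x²)`. -/
theorem stmt_8 (u x : ℝ) (hu : |u| < 1) :
    HasSum (fun a : ℕ => (Polynomial.aeval x (Polynomial.hermite a) : ℝ) ^ 2 * u ^ a /
        (a.factorial : ℝ))
      ((1 - u ^ 2) ^ (-(1 / 2 : ℝ)) * Real.exp (u / (1 + u) * x ^ 2)) := by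
  have hF : HasSum (fun a => tt u a x) (FF u x) := (summable_tt hu x).hasSum
  have hfe : (fun a : ℕ => (Polynomial.aeval x (Polynomial.hermite a) : ℝ) ^ 2 * u ^ a /
      (a.factorial : ℝ)) = fun a => tt u a x := funext fun a => by rw [mH_aeval, tt]
  have hval : FF u x = (1 - u ^ 2) ^ (-(1 / 2 : ℝ)) * Real.exp (u / (1 + u) * x ^ 2) := by
    rw [FF_eq hu x, FF_zero_eq, gg_eq hu]
  rw [hfe, ← hval]
  exact hF
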